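/- Let T₁ ∈ I satisfy f(T₁) ≥ α·f(T₁ ∪ OPT), T₂ satisfy f(T₂) ≥ α·f(T₂ ∪ (OPT ∖ T₁)), and T₃ satisfy f(T₃) ≥ (1/2)·f(T₁ ∩ OPT), and suppose f(T₁ ∪ OPT) + f(T₂ ∪ (OPT∖T₁)) + f(T₁ ∩ OPT) ≥ f(OPT). Then T = argmax{f(T₁), f(T₂), f(T₃)} satisfies f(T) ≥ (α/(2(1+α)))·f(OPT). -/
import Mathlib


open MeasureTheory Finset

/-- A set function is submodular. -/
def Submodular {V : Type*} [DecidableEq V] (f : Finset V → ℝ) : Prop :=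
  ∀ A B : Finset V, f (A ∪ B) + f (A ∩ B) ≤ f A + f B

/-- The Lovász extension: expectation over a uniform threshold θ ∈ (0,1). -/
noncomputable def lovasz {V : Type*} [Fintype V] [DecidableEq V]
    (f : Finset V → ℝ) (x : V → ℝ) : ℝ :=
  ∫ θ in Set.Ioo (0:ℝ) 1, f (Finset.univ.filter (fun i => θ ≤ x i))

/-- Characteristic vector of a finite set. -/
def charVec {V : Type*} [DecidableEq V] (S : Finset V) : V → ℝ :=
  fun i => if i ∈ S then 1 else 0

/-- The best of `T₁, T₂, T₃` achieves an `α/(2(1+α))` fraction of `f(OPT)`. -/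
theorem best_of_three {V : Type*} [DecidableEq V]
    (f : Finset V → ℝ) (hnn : ∀ A : Finset V, 0 ≤ f A)
    (α : ℝ) (hα : 0 < α) (hα1 : α ≤ 1)
    (OPT T1 T2 T3 : Finset V)
    (h1 : α * f (T1 ∪ OPT) ≤ f T1)
    (h2 : α * f (T2 ∪ (OPT \ T1)) ≤ f T2)
    (h3 : (1 / 2 : ℝ) * f (T1 ∩ OPT) ≤ f T3)
    (hsum : f OPT ≤ f (T1 ∪ OPT) + f (T2 ∪ (OPT \ T1)) + f (T1 ∩ OPT)) :
    α / (2 * (1 + α)) * f OPT ≤ max (f T1) (max (f T2) (f T3)) := by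
  set M := max (f T1) (max (f T2) (f T3)) with hM
  have hM1 : f T1 ≤ M := le_max_left _ _
  have hM2 : f T2 ≤ M := le_trans (le_max_left _ _) (le_max_right _ _)
  have hM3 : f T3 ≤ M := le_trans (le_max_right _ _) (le_max_right _ _)
  have hMnn : 0 ≤ M := le_trans (hnn T1) hM1
  have hden : 0 < 2 * (1 + α) := by nlinarith
  rw [div_mul_eq_mul_div, div_le_iff₀ hden]
  nlinarith [hnn (T1 ∪ OPT), hnn (T2 ∪ (OPT \ T1)), hnn (T1 ∩ OPT), hnn OPT]
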